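/- The similarity relation is in general not transitive: with L having a single binary relation symbol R, let A be the structure on the two-element set {a, a'} with R holding exactly of the pair (a, a'); let B be the structure on {b, b'} with R holding exactly of (b, b') and (b', b); and let C be the structure on {c, c'} with R holding exactly of (c', c). Then (A,B) ⊨ a ≲ b and (B,C) ⊨ b ≲ c, whereas (A,C) ⊨ a ≴ c; in particular, c-Type_{(A,C)}(a ≲ c) is strictly contained in c-Type_{(A,C)}(a ≲ c'). -/

import Mathlib

open FirstOrder FirstOrder.Language

universe u v w x

namespace Similarity

variable {L : FirstOrder.Language.{u, v}}

/-- An `L`-formula in one designated free variable `y` is *conjunctive* iff it is built from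
literals (equalities, disequalities, relation atoms and negated relation atoms) using only
conjunction and the quantifiers `∀` and `∃`; in particular it contains no disjunctions and
negation occurs only directly in front of atomic formulas. -/
inductive IsConjunctive : ∀ {n : ℕ}, L.BoundedFormula (Fin 1) n → Prop
  | equal {n} (t u : L.Term (Fin 1 ⊕ Fin n)) : IsConjunctive (BoundedFormula.equal t u)
  | nequal {n} (t u : L.Term (Fin 1 ⊕ Fin n)) : IsConjunctive (BoundedFormula.equal t u).not
  | rel {n l} (R : L.Relations l) (ts : Fin l → L.Term (Fin 1 ⊕ Fin n)) :
      IsConjunctive (BoundedFormula.rel R ts)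
  | nrel {n l} (R : L.Relations l) (ts : Fin l → L.Term (Fin 1 ⊕ Fin n)) :
      IsConjunctive (BoundedFormula.rel R ts).not
  | inf {n} {φ ψ : L.BoundedFormula (Fin 1) n} :
      IsConjunctive φ → IsConjunctive ψ → IsConjunctive (φ ⊓ ψ)
  | all {n} {φ : L.BoundedFormula (Fin 1) (n + 1)} : IsConjunctive φ → IsConjunctive φ.all
  | ex {n} {φ : L.BoundedFormula (Fin 1) (n + 1)} : IsConjunctive φ → IsConjunctive φ.ex

/-- The conjunctive type `c-Type_A(a)` of an element `a` in an `L`-structure `A`: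
the set of conjunctive `L`-formulas `φ(y)` such that `A ⊨ φ(a)`. -/
def cType {M : Type w} (S : L.Structure M) (a : M) : Set (L.Formula (Fin 1)) :=
  { φ | IsConjunctive φ ∧ @Formula.Realize L M S (Fin 1) φ (fun _ => a) }

/-- The set of justifications `c-Type_{(A,B)}(a ≲ b) := c-Type_A(a) ∩ c-Type_B(b)`. -/
def Just {M : Type w} {N : Type x} (SA : L.Structure M) (SB : L.Structure N)
    (a : M) (b : N) : Set (L.Formula (Fin 1)) :=
  cType SA a ∩ cType SB b

/-- `(A,B) ⊨ a ≲ b` for structures `A`, `B` whose domains are (possibly distinct) types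
`M`, `N`, so that `a : M` is not an element of `B` and the exclusion clause
"except for `a` in case `a ∈ B`" is vacuous: there is no `b' : N` such that
`c-Type_A(a) ∩ c-Type_B(b)` is strictly contained in `c-Type_A(a) ∩ c-Type_B(b')`. -/
def Lesssim {M : Type w} {N : Type x} (SA : L.Structure M) (SB : L.Structure N)
    (a : M) (b : N) : Prop :=
  ¬ ∃ b' : N, Just SA SB a b ⊂ Just SA SB a b'

/-- `(A,B) ⊨ a ≈ b` iff `(A,B) ⊨ a ≲ b` and `(B,A) ⊨ b ≲ a`. -/
def Approx {M : Type w} {N : Type x} (SA : L.Structure M) (SB : L.Structure N)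
    (a : M) (b : N) : Prop :=
  Lesssim SA SB a b ∧ Lesssim SB SA b a

end Similarity

/-- The first-order language with a single binary relation symbol `R`. -/
def LR : FirstOrder.Language :=
  ⟨fun _ => Empty, fun n => match n with | 2 => PUnit | _ => Empty⟩

/-- The two-element domain `{a, a'}` of the structure `A`. -/
inductive DomA | a | a'

/-- The two-element domain `{b, b'}` of the structure `B`. -/
inductive DomB | b | b'

/-- The two-element domain `{c, c'}` of the structure `C`. -/
inductive DomC | c | c'

/-- The structure `A` on `{a, a'}` with `R` holding exactly of the pair `(a, a')`. -/
def SA : LR.Structure DomA where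
  funMap {n} f _ := f.elim
  RelMap {n} r xs := match n, r with | 2, _ => xs 0 = DomA.a ∧ xs 1 = DomA.a'

/-- The structure `B` on `{b, b'}` with `R` holding exactly of `(b, b')` and `(b', b)`. -/
def SB : LR.Structure DomB where
  funMap {n} f _ := f.elim
  RelMap {n} r xs :=
    match n, r with
    | 2, _ => (xs 0 = DomB.b ∧ xs 1 = DomB.b') ∨ (xs 0 = DomB.b' ∧ xs 1 = DomB.b)

/-- The structure `C` on `{c, c'}` with `R` holding exactly of the pair `(c', c)`. -/
def SC : LR.Structure DomC where
  funMap {n} f _ := f.elim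
  RelMap {n} r xs := match n, r with | 2, _ => xs 0 = DomC.c' ∧ xs 1 = DomC.c

section Aux

open Similarity

attribute [local instance] SA SB SC

/-- the binary relation symbol -/
def rR : LR.Relations 2 := PUnit.unit

/-- `∃ x, R(y, x)` -/
def φout : LR.Formula (Fin 1) :=
  (BoundedFormula.rel (n := 1) rR
    ![FirstOrder.Language.Term.var (Sum.inl 0), FirstOrder.Language.Term.var (Sum.inr 0)]).ex

/-- `∃ x, R(x, y)` -/
def φin : LR.Formula (Fin 1) :=
  (BoundedFormula.rel (n := 1) rR
    ![FirstOrder.Language.Term.var (Sum.inr 0), FirstOrder.Language.Term.var (Sum.inl 0)]).ex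

lemma φout_conj : IsConjunctive φout := IsConjunctive.ex (IsConjunctive.rel _ _)
lemma φin_conj : IsConjunctive φin := IsConjunctive.ex (IsConjunctive.rel _ _)

/-- swap automorphism of B -/
def swapB : DomB → DomB | DomB.b => DomB.b' | DomB.b' => DomB.b

def eB : @FirstOrder.Language.Equiv LR DomB DomB SB SB where
  toFun := swapB
  invFun := swapB
  left_inv x := by cases x <;> rfl
  right_inv x := by cases x <;> rfl
  map_fun' {n} f x := f.elim
  map_rel' {n} r x := by
    match n, r with
    | 2, _ =>
      show ((swapB (x 0) = DomB.b ∧ swapB (x 1) = DomB.b') ∨ _) ↔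
        ((x 0 = DomB.b ∧ x 1 = DomB.b') ∨ (x 0 = DomB.b' ∧ x 1 = DomB.b))
      rcases hx0 : x 0 <;> rcases hx1 : x 1 <;>
        simp [SB, Function.comp, hx0, hx1, swapB]

/-- isomorphism C ≃ A, c ↦ a', c' ↦ a -/
def cToA : DomC → DomA | DomC.c => DomA.a' | DomC.c' => DomA.a
def aToC : DomA → DomC | DomA.a => DomC.c' | DomA.a' => DomC.c

def eCA : @FirstOrder.Language.Equiv LR DomC DomA SC SA where
  toFun := cToA
  invFun := aToC
  left_inv x := by cases x <;> rfl
  right_inv x := by cases x <;> rfl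
  map_fun' {n} f x := f.elim
  map_rel' {n} r x := by
    match n, r with
    | 2, _ =>
      show (cToA (x 0) = DomA.a ∧ cToA (x 1) = DomA.a') ↔ (x 0 = DomC.c' ∧ x 1 = DomC.c)
      rcases hx0 : x 0 <;> rcases hx1 : x 1 <;>
        simp [SA, SC, Function.comp, hx0, hx1, cToA]

lemma cType_b_eq : cType SB DomB.b = cType SB DomB.b' := by
  ext φ
  have h := fun (v : Fin 1 → DomB) =>
    @FirstOrder.Language.StrongHomClass.realize_formula LR DomB DomB SB SB (Fin 1)
      (@FirstOrder.Language.Equiv LR DomB DomB SB SB) _ _ eB φ v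
  constructor
  · rintro ⟨hc, hr⟩
    exact ⟨hc, (h (fun _ => DomB.b)).2 hr⟩
  · rintro ⟨hc, hr⟩
    exact ⟨hc, (h (fun _ => DomB.b')).2 hr⟩

lemma cType_c'_eq : cType SC DomC.c' = cType SA DomA.a := by
  ext φ
  have h := fun (v : Fin 1 → DomC) =>
    @FirstOrder.Language.StrongHomClass.realize_formula LR DomC DomA SC SA (Fin 1)
      (@FirstOrder.Language.Equiv LR DomC DomA SC SA) _ _ eCA φ v
  constructor
  · rintro ⟨hc, hr⟩
    exact ⟨hc, (h (fun _ => DomC.c')).2 hr⟩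
  · rintro ⟨hc, hr⟩
    exact ⟨hc, (h (fun _ => DomC.c')).1 hr⟩

lemma realize_φout_a : @Formula.Realize LR DomA SA (Fin 1) φout (fun _ => DomA.a) := by
  rw [Formula.Realize, φout, BoundedFormula.realize_ex]
  exact ⟨DomA.a', rfl, rfl⟩

lemma not_realize_φout_c : ¬ @Formula.Realize LR DomC SC (Fin 1) φout (fun _ => DomC.c) := by
  rw [Formula.Realize, φout, BoundedFormula.realize_ex]
  rintro ⟨x, hx⟩
  cases hx.1

lemma realize_φout_c' : @Formula.Realize LR DomC SC (Fin 1) φout (fun _ => DomC.c') := by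
  rw [Formula.Realize, φout, BoundedFormula.realize_ex]
  exact ⟨DomC.c, rfl, rfl⟩

lemma realize_φin_b : @Formula.Realize LR DomB SB (Fin 1) φin (fun _ => DomB.b) := by
  rw [Formula.Realize, φin, BoundedFormula.realize_ex]
  exact ⟨DomB.b', Or.inr ⟨rfl, rfl⟩⟩

lemma realize_φin_c : @Formula.Realize LR DomC SC (Fin 1) φin (fun _ => DomC.c) := by
  rw [Formula.Realize, φin, BoundedFormula.realize_ex]
  exact ⟨DomC.c', rfl, rfl⟩

lemma not_realize_φin_c' : ¬ @Formula.Realize LR DomC SC (Fin 1) φin (fun _ => DomC.c') := by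
  rw [Formula.Realize, φin, BoundedFormula.realize_ex]
  rintro ⟨x, hx⟩
  cases hx.2

end Aux

open Similarity in
/-- The similarity relation is in general not transitive: `(A,B) ⊨ a ≲ b` and
`(B,C) ⊨ b ≲ c`, whereas `(A,C) ⊨ a ≴ c`; in particular, `c-Type_{(A,C)}(a ≲ c)` is
strictly contained in `c-Type_{(A,C)}(a ≲ c')`. -/
theorem similarity_not_transitive :
    Lesssim SA SB DomA.a DomB.b ∧
      Lesssim SB SC DomB.b DomC.c ∧
      ¬ Lesssim SA SC DomA.a DomC.c ∧
      Just SA SC DomA.a DomC.c ⊂ Just SA SC DomA.a DomC.c' := by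
  have hCC' : Just SA SC DomA.a DomC.c ⊂ Just SA SC DomA.a DomC.c' := by
    constructor
    · intro φ hφ
      refine ⟨hφ.1, ?_⟩
      rw [cType_c'_eq]
      exact hφ.1
    · intro hsub
      have hmem : φout ∈ Just SA SC DomA.a DomC.c' :=
        ⟨⟨φout_conj, realize_φout_a⟩, ⟨φout_conj, realize_φout_c'⟩⟩
      exact not_realize_φout_c (hsub hmem).2.2
  refine ⟨?_, ?_, ?_, hCC'⟩
  · rintro ⟨b', hb'⟩
    have heq : Just SA SB DomA.a DomB.b = Just SA SB DomA.a b' := by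
      cases b'
      · rfl
      · unfold Just; rw [cType_b_eq]
    rw [heq] at hb'
    exact hb'.2 hb'.1
  · rintro ⟨c'', hc''⟩
    cases c''
    · exact hc''.2 hc''.1
    · have hmem : φin ∈ Just SB SC DomB.b DomC.c :=
        ⟨⟨φin_conj, realize_φin_b⟩, ⟨φin_conj, realize_φin_c⟩⟩
      exact not_realize_φin_c' (hc''.1 hmem).2.2
  · intro h
    exact h ⟨DomC.c', hCC'⟩
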